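/- arXiv:1210.0254 — 2 statements merged into one kernel-verified Lean document; each statement's English description precedes it below -/
import Mathlib

section
/- Let n ≥ 2 be an integer and let λ_1, …, λ_n be positive real numbers. Let α, β > 0 be real numbers and suppose that 0 ≥ 1 − α·Σ_{i=1}^n (1/λ_i) + β·Σ_{i=1}^n (1/λ_i²). If 4/n ≤ α²/β < 4/(n−1), then for each i one has λ_i ≤ 2β/(α − √(nα² − 4β)). -/
set_option maxHeartbeats 1000000 in
theorem eigenvalue_bound (n : ℕ) (hn : 2 ≤ n) (lam : Fin n → ℝ)
    (hlam : ∀ i, 0 < lam i) (α β : ℝ) (hα : 0 < α) (hβ : 0 < β)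
    (h : 0 ≥ 1 - α * ∑ i, 1 / lam i + β * ∑ i, 1 / (lam i) ^ 2)
    (h1 : 4 / (n : ℝ) ≤ α ^ 2 / β) (h2 : α ^ 2 / β < 4 / ((n : ℝ) - 1)) :
    ∀ i, lam i ≤ 2 * β / (α - Real.sqrt ((n : ℝ) * α ^ 2 - 4 * β)) := by
  intro i
  set nn : ℝ := (n : ℝ) - 1 with hnn_def
  have hn1 : (2:ℝ) ≤ (n:ℝ) := by exact_mod_cast hn
  have hnn : 0 < nn := by rw [hnn_def]; linarith
  have hd0 : 0 ≤ (n:ℝ) * α ^ 2 - 4 * β := by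
    rw [div_le_div_iff₀ (by linarith) hβ] at h1
    nlinarith
  have hdlt : (n:ℝ) * α ^ 2 - 4 * β < α ^ 2 := by
    rw [div_lt_div_iff₀ hβ hnn] at h2
    nlinarith
  set s := Real.sqrt ((n:ℝ) * α ^ 2 - 4 * β) with hs_def
  have hs2 : s ^ 2 = (n:ℝ) * α ^ 2 - 4 * β := Real.sq_sqrt hd0
  have hs0 : 0 ≤ s := Real.sqrt_nonneg _
  have hslt : s < α := by nlinarith
  have hαs : 0 < α - s := by linarith
  have hli0 : 0 < lam i := hlam i
  set x := 1 / lam i with hx_def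
  have hxpos : 0 < x := by positivity
  set T1 := ∑ j ∈ Finset.univ.erase i, 1 / lam j with hT1
  set T2 := ∑ j ∈ Finset.univ.erase i, 1 / (lam j) ^ 2 with hT2
  have hsum1 : ∑ j, 1 / lam j = x + T1 := by
    rw [hT1, hx_def, ← Finset.add_sum_erase _ _ (Finset.mem_univ i)]
  have hsum2 : ∑ j, 1 / (lam j) ^ 2 = x ^ 2 + T2 := by
    rw [hT2, hx_def, ← Finset.add_sum_erase _ _ (Finset.mem_univ i), div_pow, one_pow]
  have hcard : ((Finset.univ.erase i).card : ℝ) = nn := by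
    rw [Finset.card_erase_of_mem (Finset.mem_univ i), Finset.card_univ, Fintype.card_fin,
      hnn_def, Nat.cast_sub (by omega : 1 ≤ n), Nat.cast_one]
  have hcs : T1 ^ 2 ≤ nn * T2 := by
    have hh := sq_sum_le_card_mul_sum_sq (s := Finset.univ.erase i) (f := fun j => 1 / lam j)
    simp only [div_pow, one_pow] at hh
    calc T1 ^ 2 ≤ ((Finset.univ.erase i).card : ℝ) * T2 := hh
    _ = nn * T2 := by rw [hcard]
  rw [hsum1, hsum2] at h
  have hcs' : 4 * β ^ 2 * T1 ^ 2 ≤ 4 * β ^ 2 * (nn * T2) := by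
    have := mul_le_mul_of_nonneg_left hcs (by positivity : (0:ℝ) ≤ 4 * β ^ 2)
    linarith
  have hA : (4 * α * β * T1 - 4 * β ^ 2 * T2) * nn ≤ (nn * α ^ 2) * nn := by
    nlinarith [sq_nonneg (nn * α - 2 * β * T1)]
  have hB : 4 * α * β * T1 - 4 * β ^ 2 * T2 ≤ nn * α ^ 2 :=
    (mul_le_mul_iff_of_pos_right hnn).mp hA
  have hC : 1 - α * x + β * x ^ 2 ≤ α * T1 - β * T2 := by linarith
  have hC' := mul_le_mul_of_nonneg_left hC (by positivity : (0:ℝ) ≤ 4 * β)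
  have hkey : 4 * β - 4 * α * β * x + 4 * β ^ 2 * x ^ 2 ≤ nn * α ^ 2 := by linarith [hC', hB]
  clear h hcs hcs' hA hB hC hC' hsum1 hsum2 hcard hT1 hT2
  have hsq : (2 * β * x - α) ^ 2 ≤ s ^ 2 := by nlinarith [hkey, hs2]
  have hxlb : α - s ≤ 2 * β * x := by nlinarith [hsq, hs0]
  have hli : lam i = 1 / x := by rw [hx_def, one_div_one_div]
  rw [hli, div_le_div_iff₀ hxpos hαs]
  nlinarith
end

section
/- Let n ≥ 2 be an integer, and let C₀ > 0, E > 0, and ε with 0 < ε < 1/(n−1) be real numbers. Then there exist real constants A > B > 0 with B·n·E > C₀ and a constant M > 0, depending only on n, C₀, E and ε, such that: whenever λ_1, …, λ_n are positive real numbers satisfying 0 ≥ (B·n·E − C₀) − (A+B)·Σ_{i=1}^n (1/λ_i) + A·((n−1)(1+ε)/(nE))·Σ_{i=1}^n (1/λ_i²), one has λ_i ≤ M for every i. -/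
theorem second_order_core (n : ℕ) (hn : 2 ≤ n) (C₀ E ε : ℝ)
    (hC : 0 < C₀) (hE : 0 < E) (hε1 : 0 < ε) (hε2 : ε < 1 / ((n : ℝ) - 1)) :
    ∃ A B M : ℝ, A > B ∧ B > 0 ∧ B * n * E > C₀ ∧ M > 0 ∧
      ∀ lam : Fin n → ℝ, (∀ i, 0 < lam i) →
        0 ≥ (B * n * E - C₀) - (A + B) * ∑ i, 1 / lam i
            + A * (((n : ℝ) - 1) * (1 + ε) / (n * E)) * ∑ i, 1 / (lam i) ^ 2 →
        ∀ i, lam i ≤ M := by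
  have hn' : (2:ℝ) ≤ (n:ℝ) := by exact_mod_cast hn
  have hn1 : (1:ℝ) ≤ (n:ℝ) - 1 := by linarith
  have hnpos : (0:ℝ) < (n:ℝ) := by linarith
  obtain ⟨γ, hγdef⟩ : ∃ γ : ℝ, γ = ((n:ℝ) - 1) * (1 + ε) / ((n:ℝ) * E) := ⟨_, rfl⟩
  have hγ : 0 < γ := by
    rw [hγdef]
    exact div_pos (mul_pos (by linarith) (by linarith)) (mul_pos hnpos hE)
  obtain ⟨B, hBdef⟩ : ∃ B : ℝ,
      B = (C₀ + 1) * 4 * (1 + ε) ^ 2 / (ε * (4 + 3 * ε) * ((n:ℝ) * E)) := ⟨_, rfl⟩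
  have hden : 0 < ε * (4 + 3 * ε) * ((n:ℝ) * E) := by positivity
  have hB : 0 < B := by rw [hBdef]; positivity
  obtain ⟨A, hAdef⟩ : ∃ A : ℝ, A = (1 + ε) * B := ⟨_, rfl⟩
  have hA : 0 < A := by rw [hAdef]; positivity
  have h1 : B * (ε * (4 + 3 * ε) * ((n:ℝ) * E)) = (C₀ + 1) * 4 * (1 + ε) ^ 2 := by
    rw [hBdef]; field_simp
  obtain ⟨K, hKdef⟩ : ∃ K : ℝ, K = (A + B) ^ 2 / (4 * A * γ) := ⟨_, rfl⟩
  have hγne : γ ≠ 0 := ne_of_gt hγ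
  have hKγ : 4 * A * γ * K = (A + B) ^ 2 := by
    rw [hKdef]; field_simp
  have hK : ((n:ℝ) - 1) * K = B * (n:ℝ) * E - C₀ - 1 := by
    have h2 : 4 * A * γ * (((n:ℝ) - 1) * K) = 4 * A * γ * (B * (n:ℝ) * E - C₀ - 1) := by
      rw [show 4 * A * γ * (((n:ℝ) - 1) * K) = ((n:ℝ) - 1) * (4 * A * γ * K) by ring, hKγ,
        hAdef, hγdef]
      have hnE : (n:ℝ) * E ≠ 0 := by positivity
      field_simp
      linear_combination (-1 : ℝ) * h1
    have h3 : 4 * A * γ ≠ 0 := ne_of_gt (by nlinarith)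
    exact mul_left_cancel₀ h3 h2
  have hKpos : 0 < K := by
    rw [hKdef]
    exact div_pos (pow_pos (by linarith) 2) (by nlinarith)
  refine ⟨A, B, A + B, ?_, hB, ?_, by positivity, ?_⟩
  · rw [hAdef]; nlinarith
  · have : 0 < ((n:ℝ) - 1) * K := mul_pos (by linarith) hKpos
    linarith [hK]
  · intro lam hpos hineq i
    have hx : ∀ j, 0 < 1 / lam j := fun j => one_div_pos.mpr (hpos j)
    have key : ∀ j : Fin n, A * γ * (1 / lam j) ^ 2 - (A + B) * (1 / lam j) ≥ -K := by
      intro j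
      nlinarith [sq_nonneg (2 * A * γ * (1 / lam j) - (A + B)), mul_pos hA hγ, hKγ]
    have hsum : (0:ℝ) ≥ (B * n * E - C₀) +
        ∑ j, (A * γ * (1 / lam j) ^ 2 - (A + B) * (1 / lam j)) := by
      have e1 : ∑ j, (A * γ * (1 / lam j) ^ 2 - (A + B) * (1 / lam j))
          = A * γ * ∑ j, (1 / lam j) ^ 2 - (A + B) * ∑ j, (1 / lam j) := by
        rw [Finset.sum_sub_distrib, Finset.mul_sum, Finset.mul_sum]
      have e2 : ∑ j, (1 / lam j) ^ 2 = ∑ j, 1 / (lam j) ^ 2 := by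
        apply Finset.sum_congr rfl; intro j _; rw [div_pow, one_pow]
      rw [e1, e2, hγdef]
      linarith [hineq]
    have hsplit : ∑ j, (A * γ * (1 / lam j) ^ 2 - (A + B) * (1 / lam j))
        = (A * γ * (1 / lam i) ^ 2 - (A + B) * (1 / lam i)) +
          ∑ j ∈ Finset.univ.erase i, (A * γ * (1 / lam j) ^ 2 - (A + B) * (1 / lam j)) := by
      exact (Finset.add_sum_erase _ _ (Finset.mem_univ i)).symm
    have hcard : ((Finset.univ.erase i).card : ℝ) = (n:ℝ) - 1 := by
      rw [Finset.card_erase_of_mem (Finset.mem_univ i), Finset.card_univ, Fintype.card_fin]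
      have : (1:ℕ) ≤ n := by omega
      push_cast [Nat.cast_sub this]
      ring
    have hrest : ∑ j ∈ Finset.univ.erase i, (A * γ * (1 / lam j) ^ 2 - (A + B) * (1 / lam j))
        ≥ -(((n:ℝ) - 1) * K) := by
      calc ∑ j ∈ Finset.univ.erase i, (A * γ * (1 / lam j) ^ 2 - (A + B) * (1 / lam j))
          ≥ ∑ _j ∈ Finset.univ.erase i, (-K) := Finset.sum_le_sum (fun j _ => key j)
        _ = ((Finset.univ.erase i).card : ℝ) * (-K) := by
            rw [Finset.sum_const, nsmul_eq_mul]
        _ = -(((n:ℝ) - 1) * K) := by rw [hcard]; ring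
    have hfi : A * γ * (1 / lam i) ^ 2 - (A + B) * (1 / lam i) ≤ -1 := by
      have h := hsum
      rw [hsplit] at h
      linarith [hrest, hK]
    have hxi : (A + B) * (1 / lam i) ≥ 1 := by
      have h0 : 0 ≤ A * γ * (1 / lam i) ^ 2 :=
        mul_nonneg (mul_pos hA hγ).le (sq_nonneg _)
      linarith
    have hli : 0 < lam i := hpos i
    rw [ge_iff_le, mul_one_div, le_div_iff₀ hli, one_mul] at hxi
    linarith
end
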